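/- Let 𝒜 be a finite set, let η : 𝒜 → ℝ_{>0}, and let ψ(q) = Σ_{a∈𝒜} (1/η(a)) ln(1/q(a)) on the open positive orthant ℝ^𝒜_{>0}. Let p_t ∈ ℝ^𝒜_{>0} and let ℓ ∈ ℝ^𝒜 satisfy η(a) p_t(a) ℓ(a) ≥ −1/2 for every a. Define q*(a) = (1/p_t(a) + η(a) ℓ(a))^{−1} for each a (which is well defined and strictly positive). Then sup_{q ∈ ℝ^𝒜_{>0}} { ⟨p_t − q, ℓ⟩ − D_ψ(q, p_t) } = D_ψ(p_t, q*), and moreover D_ψ(p_t, q*) = Σ_{a∈𝒜} (1/η(a)) ( η(a) p_t(a) ℓ(a) − ln(1 + η(a) p_t(a) ℓ(a)) ). -/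

import Mathlib

open Finset

lemma psi_hasFDerivAt {𝒜 : Type*} [Fintype 𝒜] (η : 𝒜 → ℝ) (q0 : 𝒜 → ℝ) (h : ∀ a, q0 a ≠ 0) :
    HasFDerivAt (fun q : 𝒜 → ℝ => ∑ a, (1 / η a) * Real.log (1 / q a))
      (∑ a, ((-(1 / (η a * q0 a))) • (ContinuousLinearMap.proj a : (𝒜 → ℝ) →L[ℝ] ℝ))) q0 := by
  apply HasFDerivAt.fun_sum
  intro a _
  have h1 : HasFDerivAt (fun q : 𝒜 → ℝ => q a) (ContinuousLinearMap.proj a : (𝒜 → ℝ) →L[ℝ] ℝ) q0 :=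
    hasFDerivAt_apply a q0
  have h2 := ((h1.log (h a)).const_mul (1 / η a)).fun_neg
  have heq : (fun q : 𝒜 → ℝ => (1 / η a) * Real.log (1 / q a))
      = fun q => -((1 / η a) * Real.log (q a)) := by
    funext q; simp only [one_div, Real.log_inv]; ring
  rw [heq]
  convert h2 using 1
  rw [smul_smul, ← neg_smul]
  congr 1
  field_simp

lemma coord_le {η pt x l : ℝ} (hη : 0 < η) (hpt : 0 < pt) (hx : 0 < x) (hu : 0 < 1 + η * pt * l) :
    (pt - x) * l - ((1 / η) * Real.log (1 / x) - (1 / η) * Real.log (1 / pt)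
        + (1 / (η * pt)) * (x - pt))
      ≤ (1 / η) * (η * pt * l - Real.log (1 + η * pt * l)) := by
  set u := 1 + η * pt * l with hu_def
  have hl : η * pt * l = u - 1 := by rw [hu_def]; ring
  have ht : 0 < x * u / pt := by positivity
  have hlog := Real.log_le_sub_one_of_pos ht
  rw [Real.log_div (by positivity) (ne_of_gt hpt),
      Real.log_mul (ne_of_gt hx) (ne_of_gt hu)] at hlog
  have hident : (1 / η) * (η * pt * l - Real.log u)
      - ((pt - x) * l - ((1 / η) * Real.log (1 / x) - (1 / η) * Real.log (1 / pt)
          + (1 / (η * pt)) * (x - pt)))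
      = (1 / η) * (x * u / pt - 1 - (Real.log x + Real.log u - Real.log pt)) := by
    have hlx : Real.log (1 / x) = -Real.log x := by rw [one_div, Real.log_inv]
    have hlp : Real.log (1 / pt) = -Real.log pt := by rw [one_div, Real.log_inv]
    rw [hlx, hlp]
    have hleq : l = (u - 1) / (η * pt) := by
      field_simp
      linarith [hl]
    rw [hleq]
    field_simp
    ring
  have hpos : (0:ℝ) < 1 / η := by positivity
  nlinarith [mul_nonneg (le_of_lt hpos) (sub_nonneg.mpr hlog)]

lemma coord_eq {η pt l : ℝ} (hη : 0 < η) (hpt : 0 < pt) (hu : 0 < 1 + η * pt * l) :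
    (pt - pt / (1 + η * pt * l)) * l
      - ((1 / η) * Real.log (1 / (pt / (1 + η * pt * l))) - (1 / η) * Real.log (1 / pt)
        + (1 / (η * pt)) * (pt / (1 + η * pt * l) - pt))
      = (1 / η) * (η * pt * l - Real.log (1 + η * pt * l)) := by
  set u := 1 + η * pt * l with hu_def
  have hlx : Real.log (1 / (pt / u)) = Real.log u - Real.log pt := by
    rw [one_div_div, Real.log_div (ne_of_gt hu) (ne_of_gt hpt)]
  have hlp : Real.log (1 / pt) = -Real.log pt := by rw [one_div, Real.log_inv]
  rw [hlx, hlp]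
  have hleq : l = (u - 1) / (η * pt) := by field_simp; linarith [hu_def.symm]
  rw [hleq]
  field_simp
  ring

lemma coord_D {η pt l : ℝ} (hη : 0 < η) (hpt : 0 < pt) (hu : 0 < 1 + η * pt * l) :
    (1 / η) * Real.log (1 / pt) - (1 / η) * Real.log (1 / (pt / (1 + η * pt * l)))
      + (1 / (η * (pt / (1 + η * pt * l)))) * (pt - pt / (1 + η * pt * l))
      = (1 / η) * (η * pt * l - Real.log (1 + η * pt * l)) := by
  set u := 1 + η * pt * l with hu_def
  have hlx : Real.log (1 / (pt / u)) = Real.log u - Real.log pt := by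
    rw [one_div_div, Real.log_div (ne_of_gt hu) (ne_of_gt hpt)]
  have hlp : Real.log (1 / pt) = -Real.log pt := by rw [one_div, Real.log_inv]
  rw [hlx, hlp]
  have hleq : l = (u - 1) / (η * pt) := by field_simp; linarith [hu_def.symm]
  rw [hleq]
  field_simp
  ring

/-- **Characterization of the log-barrier stability maximizer over the positive orthant.**
Let `ψ q = ∑ a, (1 / η a) * log (1 / q a)` on the open positive orthant,
`pt` strictly positive, and `ℓ` with `η a * pt a * ℓ a ≥ -1/2` for every `a`.
With `q* a = (1 / pt a + η a * ℓ a)⁻¹` (well defined and strictly positive),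
the supremum of `q ↦ ⟨pt - q, ℓ⟩ - D_ψ(q, pt)` over strictly positive `q` equals
`D_ψ(pt, q*)`, which moreover equals
`∑ a, (1 / η a) * (η a * pt a * ℓ a - log (1 + η a * pt a * ℓ a))`.
Here `D_ψ(p, q) = ψ p - ψ q - ⟨∇ψ(q), p - q⟩`. -/
theorem log_barrier_sup_characterization
    {𝒜 : Type*} [Fintype 𝒜]
    (η : 𝒜 → ℝ) (hη : ∀ a, 0 < η a)
    (ψ : (𝒜 → ℝ) → ℝ)
    (hψ : ψ = fun q : 𝒜 → ℝ => ∑ a, (1 / η a) * Real.log (1 / q a))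
    (pt : 𝒜 → ℝ) (hpt_pos : ∀ a, 0 < pt a)
    (ℓ : 𝒜 → ℝ) (hℓ : ∀ a, η a * pt a * ℓ a ≥ -(1 / 2))
    (qstar : 𝒜 → ℝ) (hqstar : ∀ a, qstar a = (1 / pt a + η a * ℓ a)⁻¹)
    (D : (𝒜 → ℝ) → (𝒜 → ℝ) → ℝ)
    (hD : ∀ p q : 𝒜 → ℝ, D p q = ψ p - ψ q - fderiv ℝ ψ q (p - q)) :
    (∀ a, 0 < qstar a)
    ∧ IsLUB ((fun q => (∑ a, (pt a - q a) * ℓ a) - D q pt) '' {q : 𝒜 → ℝ | ∀ a, 0 < q a})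
        (D pt qstar)
    ∧ D pt qstar
        = ∑ a, (1 / η a) * (η a * pt a * ℓ a - Real.log (1 + η a * pt a * ℓ a)) := by
  have hu : ∀ a, 0 < 1 + η a * pt a * ℓ a := fun a => by linarith [hℓ a]
  have hq_eq : ∀ a, qstar a = pt a / (1 + η a * pt a * ℓ a) := by
    intro a
    rw [hqstar a]
    have hpa : pt a ≠ 0 := (hpt_pos a).ne'
    have h1 : 1 / pt a + η a * ℓ a = (1 + η a * pt a * ℓ a) / pt a := by
      field_simp
    rw [h1, inv_div]
  have hq_pos : ∀ a, 0 < qstar a := by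
    intro a; rw [hq_eq a]; exact div_pos (hpt_pos a) (hu a)
  have hDf : ∀ p q : 𝒜 → ℝ, (∀ a, q a ≠ 0) →
      D p q = ∑ a, ((1 / η a) * Real.log (1 / p a) - (1 / η a) * Real.log (1 / q a)
        + (1 / (η a * q a)) * (p a - q a)) := by
    intro p q hq
    rw [hD, hψ]
    have hF := psi_hasFDerivAt η q hq
    rw [hF.fderiv]
    have hev : (∑ a, ((-(1 / (η a * q a))) • (ContinuousLinearMap.proj a : (𝒜 → ℝ) →L[ℝ] ℝ)))
        (p - q) = ∑ a, (-(1 / (η a * q a))) * (p a - q a) := by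
      rw [ContinuousLinearMap.sum_apply]
      simp [Pi.sub_apply]
    rw [hev, ← Finset.sum_sub_distrib, ← Finset.sum_sub_distrib]
    apply Finset.sum_congr rfl
    intro a _
    ring
  have hval : D pt qstar
      = ∑ a, (1 / η a) * (η a * pt a * ℓ a - Real.log (1 + η a * pt a * ℓ a)) := by
    rw [hDf pt qstar (fun a => ne_of_gt (hq_pos a))]
    apply Finset.sum_congr rfl
    intro a _
    rw [hq_eq a]
    exact coord_D (hη a) (hpt_pos a) (hu a)
  refine ⟨hq_pos, ⟨?_, ?_⟩, hval⟩
  · rintro y ⟨q, hq, rfl⟩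
    simp only []
    rw [hDf q pt (fun a => ne_of_gt (hpt_pos a)), hval, ← Finset.sum_sub_distrib]
    exact Finset.sum_le_sum fun a _ => coord_le (hη a) (hpt_pos a) (hq a) (hu a)
  · intro y hy
    apply hy
    refine ⟨qstar, hq_pos, ?_⟩
    simp only []
    rw [hDf qstar pt (fun a => ne_of_gt (hpt_pos a)), hval, ← Finset.sum_sub_distrib]
    apply Finset.sum_congr rfl
    intro a _
    rw [hq_eq a]
    exact coord_eq (hη a) (hpt_pos a) (hu a)
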